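/- The quadratic polynomial 8T² − 4√5·T + 3 − √5 has two distinct real roots, and neither of them equals 1/√(6+2√5) or −1/√(6+2√5). Consequently, the polynomial P₅(T) = −((2+√5)/4)·(4T − 1 + √5)·(8T² − 4√5·T + 3 − √5), which is the zeta polynomial of ψ₅(x,y) = x⁵ − (50+20√5)x³y² + (225+100√5)xy⁴ with respect to q = 6+2√5, has a root α with |α| ≠ 1/√(6+2√5); that is, the extremal invariant polynomial ψ₅ does not satisfy the Riemann hypothesis. -/

import Mathlib

/- STATEMENT 14: 8T² - 4√5 T + 3 - √5 has two distinct real roots, neither equal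
to ±1/√(6+2√5); consequently P₅(T) = -((2+√5)/4)(4T-1+√5)(8T²-4√5T+3-√5), the
zeta polynomial of ψ₅, has a root α with |α| ≠ 1/√(6+2√5): ψ₅ does not satisfy
the Riemann hypothesis. -/

noncomputable section

/-- `P₅` as a real polynomial. -/
def P5 : Polynomial ℝ :=
  -(Polynomial.C ((2 + Real.sqrt 5) / 4)) *
    (Polynomial.C 4 * Polynomial.X - Polynomial.C 1 + Polynomial.C (Real.sqrt 5)) *
    (Polynomial.C 8 * Polynomial.X ^ 2 - Polynomial.C (4 * Real.sqrt 5) * Polynomial.X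
      + Polynomial.C 3 - Polynomial.C (Real.sqrt 5))

theorem psi5_no_RH :
    (∃ r s : ℝ, r ≠ s ∧
      8 * r ^ 2 - 4 * Real.sqrt 5 * r + 3 - Real.sqrt 5 = 0 ∧
      8 * s ^ 2 - 4 * Real.sqrt 5 * s + 3 - Real.sqrt 5 = 0 ∧
      r ≠ 1 / Real.sqrt (6 + 2 * Real.sqrt 5) ∧ r ≠ -(1 / Real.sqrt (6 + 2 * Real.sqrt 5)) ∧
      s ≠ 1 / Real.sqrt (6 + 2 * Real.sqrt 5) ∧ s ≠ -(1 / Real.sqrt (6 + 2 * Real.sqrt 5))) ∧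
    ∃ z : ℂ, (P5.map (algebraMap ℝ ℂ)).IsRoot z ∧
      ‖z‖ ≠ 1 / Real.sqrt (6 + 2 * Real.sqrt 5) := by
  have h5 : Real.sqrt 5 ^ 2 = 5 := Real.sq_sqrt (by norm_num)
  have h5pos : (2:ℝ) < Real.sqrt 5 := by nlinarith [Real.sqrt_nonneg 5]
  set c : ℝ := Real.sqrt 5 with hc
  have hdnn : (0:ℝ) ≤ 2 * c - 1 := by nlinarith
  set d : ℝ := Real.sqrt (2 * c - 1) with hd
  have hd2 : d ^ 2 = 2 * c - 1 := Real.sq_sqrt hdnn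
  have hdpos : 0 < d := Real.sqrt_pos.mpr (by nlinarith)
  set r : ℝ := (c + d) / 4 with hr
  set s : ℝ := (c - d) / 4 with hs
  have hrroot : 8 * r ^ 2 - 4 * c * r + 3 - c = 0 := by
    rw [hr]; nlinarith [hd2, h5]
  have hsroot : 8 * s ^ 2 - 4 * c * s + 3 - c = 0 := by
    rw [hs]; nlinarith [hd2, h5]
  have hq : Real.sqrt (6 + 2 * c) = 1 + c := by
    rw [show (6 + 2 * c : ℝ) = (1 + c) ^ 2 by nlinarith]
    exact Real.sqrt_sq (by positivity)
  have hkey : 1 / Real.sqrt (6 + 2 * c) = (c - 1) / 4 := by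
    rw [hq]
    rw [div_eq_div_iff (by positivity) (by norm_num)]
    nlinarith
  refine ⟨⟨r, s, ?_, hrroot, hsroot, ?_, ?_, ?_, ?_⟩, ?_⟩
  · rw [hr, hs]; intro h; nlinarith
  · rw [hkey, hr]; intro h; nlinarith
  · rw [hkey, hr]; intro h; nlinarith
  · rw [hkey, hs]; intro h
    have hd1 : d = 1 := by linarith
    rw [hd1] at hd2; nlinarith
  · rw [hkey, hs]; intro h
    have hd1 : d = 2 * c - 1 := by linarith
    rw [hd1] at hd2; nlinarith
  · refine ⟨(r : ℂ), ?_, ?_⟩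
    · have hroot : P5.IsRoot r := by
        simp only [P5, Polynomial.IsRoot, Polynomial.eval_mul, Polynomial.eval_neg,
          Polynomial.eval_add, Polynomial.eval_sub, Polynomial.eval_C, Polynomial.eval_X,
          Polynomial.eval_pow]
        rw [← hc]
        have : 8 * r ^ 2 - 4 * c * r + 3 - c = 0 := hrroot
        nlinarith [this]
      show Polynomial.eval ((algebraMap ℝ ℂ) r) (P5.map (algebraMap ℝ ℂ)) = 0
      rw [Polynomial.eval_map, Polynomial.eval₂_at_apply, hroot]
      simp
    · have habs : ‖(r : ℂ)‖ = r := by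
        rw [Complex.norm_real, Real.norm_eq_abs, abs_of_pos]
        rw [hr]; positivity
      rw [habs, hkey, hr]
      intro h
      have hd1 : d = -1 := by linarith
      linarith

end
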